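/- Let m be even, m ≥ 2, and let y ∈ Ỹ_m with y_0 = 0, y_1 = 1. Suppose 𝔉'(y) (the set of odd-cardinality intervals of 𝔉(y)) contains at least one interval different from the interval [0,α] containing 0. Then for any (x, x') ∈ S̃(y) one has |𝔖(x')| ≥ 3. -/
import Mathlib


open Finset

/-- `X_m`: sequences `(x_0,…,x_m)` in `ℕ` with `x i ≤ x (i+1)` and `x i < x (i+2)`. -/
def IsX (m : ℕ) (x : ℕ → ℕ) : Prop :=
  (∀ i, i < m → x i ≤ x (i + 1)) ∧ (∀ i, i + 2 ≤ m → x i < x (i + 2))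

/-- `Y_m`: sequences with `y i ≤ y (i+1)` and `y i + 2 ≤ y (i+2)`. -/
def IsY (m : ℕ) (y : ℕ → ℕ) : Prop :=
  (∀ i, i < m → y i ≤ y (i + 1)) ∧ (∀ i, i + 2 ≤ m → y i + 2 ≤ y (i + 2))

/-- `ℰ_m`: weakly increasing sequences. -/
def IsE (m : ℕ) (e : ℕ → ℕ) : Prop := ∀ i, i < m → e i ≤ e (i + 1)

/-- `𝔖(x)`: indices `i ∈ [0,m]` with `x (i-1) < x i < x (i+1)`,
with conventions `x_{-1} = -∞`, `x_{m+1} = +∞`. -/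
def SS (m : ℕ) (x : ℕ → ℕ) : Finset ℕ :=
  (Finset.range (m + 1)).filter
    (fun i => (i = 0 ∨ x (i - 1) < x i) ∧ (i = m ∨ x i < x (i + 1)))

/-- `𝔉(y)`: intervals `[i,j] ⊆ [0,m]` with
`y_{i-1}-(i-1) < y_i-i = ⋯ = y_j-j < y_{j+1}-(j+1)` (conventions `±∞` at the ends),
encoded as pairs `(i, j)`. -/
def FF (m : ℕ) (y : ℕ → ℕ) : Finset (ℕ × ℕ) :=
  ((Finset.range (m + 1)) ×ˢ (Finset.range (m + 1))).filter
    (fun p => p.1 ≤ p.2 ∧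
      (p.1 = 0 ∨ ((y (p.1 - 1) : ℤ) - ((p.1 : ℤ) - 1) < (y p.1 : ℤ) - (p.1 : ℤ))) ∧
      (p.2 = m ∨ ((y p.2 : ℤ) - (p.2 : ℤ) < (y (p.2 + 1) : ℤ) - ((p.2 : ℤ) + 1))) ∧
      (∀ k ∈ Finset.Ico p.1 p.2, ((y k : ℤ) - (k : ℤ) = (y (k + 1) : ℤ) - ((k : ℤ) + 1))))

/-- `𝔉'(y)`: the intervals in `𝔉(y)` of odd cardinality. -/
def FF' (m : ℕ) (y : ℕ → ℕ) : Finset (ℕ × ℕ) :=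
  (FF m y).filter (fun p => Odd (p.2 - p.1 + 1))

/-- `R(y)`: endpoints of intervals in `𝔉(y)`. -/
def RR (m : ℕ) (y : ℕ → ℕ) : Finset ℕ :=
  (Finset.range (m + 1)).filter (fun k => ∃ p ∈ FF m y, k = p.1 ∨ k = p.2)

/-- `R_0(y)`: those `k` with `[k,k] ∈ 𝔉(y)`. -/
def RR0 (m : ℕ) (y : ℕ → ℕ) : Finset ℕ :=
  (Finset.range (m + 1)).filter (fun k => (k, k) ∈ FF m y)

/-- `S(y)`: pairs `(x, x') ∈ X_m × X_m` with `x + x' = y`,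
`𝔖(x) ∪ 𝔖(x') = R(y)`, `𝔖(x) ∩ 𝔖(x') = R_0(y)`, and `𝔖(x') = ∅` if `𝔉'(y) = ∅`. -/
def IsS (m : ℕ) (y x x' : ℕ → ℕ) : Prop :=
  IsX m x ∧ IsX m x' ∧ (∀ i, i ≤ m → x i + x' i = y i) ∧
  SS m x ∪ SS m x' = RR m y ∧ SS m x ∩ SS m x' = RR0 m y ∧
  (FF' m y = ∅ → SS m x' = ∅)

/-- `X̃_m`: elements of `X_m` with `x 0 = 0`, `x 1 ≥ 1`. -/
def IsXt (m : ℕ) (x : ℕ → ℕ) : Prop := IsX m x ∧ x 0 = 0 ∧ 1 ≤ x 1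

/-- `S̃(y)`: pairs `(x, x') ∈ X_m × X̃_m` with `x + x' = y`,
`𝔖(x) ∪ 𝔖(x') = R(y)`, `𝔖(x) ∩ 𝔖(x') = R_0(y)`, and `𝔖(x') = {0}` in case
every odd-cardinality interval of `𝔉(y)` has left endpoint `0`. -/
def IsSt (m : ℕ) (y x x' : ℕ → ℕ) : Prop :=
  IsX m x ∧ IsXt m x' ∧ (∀ i, i ≤ m → x i + x' i = y i) ∧
  SS m x ∪ SS m x' = RR m y ∧ SS m x ∩ SS m x' = RR0 m y ∧
  ((∀ p ∈ FF' m y, p.1 = 0) → SS m x' = {0})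

lemma mem_SS_iff (m : ℕ) (x : ℕ → ℕ) (i : ℕ) :
    i ∈ SS m x ↔ i < m + 1 ∧ (i = 0 ∨ x (i - 1) < x i) ∧ (i = m ∨ x i < x (i + 1)) := by
  simp [SS, Finset.mem_filter, Finset.mem_range, and_assoc]

/-- Parity of `|𝔖(x)|` for `x ∈ X_m`. -/
lemma SS_card_parity (m : ℕ) (x : ℕ → ℕ) (hx : IsX m x) :
    (SS m x).card % 2 = (m + 1) % 2 := by
  classical
  set A := (Finset.range (m + 1)).filter (fun i => ¬(i = 0 ∨ x (i - 1) < x i)) with hA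
  set B := (Finset.range (m + 1)).filter (fun i => ¬(i = m ∨ x i < x (i + 1))) with hB
  have hdisj : Disjoint A B := by
    rw [Finset.disjoint_left]
    intro i hiA hiB
    rw [hA, Finset.mem_filter, Finset.mem_range] at hiA
    rw [hB, Finset.mem_filter, Finset.mem_range] at hiB
    push_neg at hiA hiB
    obtain ⟨him, hi0, hia⟩ := hiA
    obtain ⟨_, hiM, hib⟩ := hiB
    have h1 : x (i - 1) < x (i - 1 + 2) := hx.2 (i - 1) (by omega)
    have h2 : x (i - 1) ≤ x (i - 1 + 1) := hx.1 (i - 1) (by omega)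
    have e1 : i - 1 + 2 = i + 1 := by omega
    have e2 : i - 1 + 1 = i := by omega
    rw [e1] at h1
    rw [e2] at h2
    omega
  have hcardBA : B.card = A.card := by
    apply Finset.card_bij (fun i _ => i + 1)
    · intro i hi
      rw [hB, Finset.mem_filter, Finset.mem_range] at hi
      push_neg at hi
      rw [hA, Finset.mem_filter, Finset.mem_range]
      push_neg
      refine ⟨by omega, by omega, ?_⟩
      simpa using hi.2.2
    · intro i _ j _ hij
      omega
    · intro j hj
      rw [hA, Finset.mem_filter, Finset.mem_range] at hj
      push_neg at hj
      obtain ⟨hjm, hj0, hja⟩ := hj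
      refine ⟨j - 1, ?_, by omega⟩
      rw [hB, Finset.mem_filter, Finset.mem_range]
      push_neg
      refine ⟨by omega, by omega, ?_⟩
      have : j - 1 + 1 = j := by omega
      rw [this]
      exact hja
  have hsplit : (SS m x).card + (A ∪ B).card = m + 1 := by
    have heq : (Finset.range (m + 1)).filter
        (fun i => ¬((i = 0 ∨ x (i - 1) < x i) ∧ (i = m ∨ x i < x (i + 1)))) = A ∪ B := by
      rw [hA, hB, ← Finset.filter_or]
      apply Finset.filter_congr
      intro i _
      constructor
      · intro hni; tauto
      · intro hni; tauto
    have := Finset.card_filter_add_card_filter_not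
      (s := Finset.range (m + 1))
      (p := fun i => (i = 0 ∨ x (i - 1) < x i) ∧ (i = m ∨ x i < x (i + 1)))
    rw [heq] at this
    simpa [SS] using this
  have hu : (A ∪ B).card = A.card + B.card := Finset.card_union_of_disjoint hdisj
  omega

/-- Alternation of increments within an interval where `y` increases by exactly 1
at each step, starting with an `x`-step. -/
lemma alt_steps (m a b : ℕ) (y x x' : ℕ → ℕ) (hx : IsX m x) (hx' : IsX m x')
    (hsum : ∀ i, i ≤ m → x i + x' i = y i) (hbm : b ≤ m)
    (hstep : ∀ k, a ≤ k → k < b → y (k + 1) = y k + 1)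
    (h1 : x a < x (a + 1)) :
    ∀ j, a + j + 1 ≤ b →
      (j % 2 = 0 → x' (a + j) = x' (a + j + 1)) ∧
      (j % 2 = 1 → x (a + j) = x (a + j + 1)) := by
  intro j
  induction j with
  | zero =>
    intro hj
    constructor
    · intro _
      have hs1 := hsum a (by omega)
      have hs2 := hsum (a + 1) (by omega)
      have hy := hstep a le_rfl (by omega)
      have hmono := hx'.1 a (by omega)
      show x' a = x' (a + 1)
      omega
    · intro hc
      exfalso
      omega
  | succ j ih =>
    intro hj
    have hj' : a + j + 1 ≤ b := by omega
    have ihj := ih hj'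
    have hy : y (a + j + 2) = y (a + j + 1) + 1 := hstep (a + j + 1) (by omega) (by omega)
    have hs1 : x (a + j + 1) + x' (a + j + 1) = y (a + j + 1) := hsum (a + j + 1) (by omega)
    have hs2 : x (a + j + 2) + x' (a + j + 2) = y (a + j + 2) := hsum (a + j + 2) (by omega)
    rcases Nat.even_or_odd j with he | ho
    · have hje : j % 2 = 0 := Nat.even_iff.mp he
      have h' : x' (a + j) = x' (a + j + 1) := ihj.1 hje
      have hlt : x' (a + j) < x' (a + j + 2) := hx'.2 (a + j) (by omega)
      have hmono : x (a + j + 1) ≤ x (a + j + 2) := hx.1 (a + j + 1) (by omega)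
      constructor
      · intro hc
        exfalso
        omega
      · intro _
        show x (a + j + 1) = x (a + j + 2)
        omega
    · have hjo : j % 2 = 1 := Nat.odd_iff.mp ho
      have h' : x (a + j) = x (a + j + 1) := ihj.2 hjo
      have hlt : x (a + j) < x (a + j + 2) := hx.2 (a + j) (by omega)
      have hmono : x' (a + j + 1) ≤ x' (a + j + 2) := hx'.1 (a + j + 1) (by omega)
      constructor
      · intro _
        show x' (a + j + 1) = x' (a + j + 2)
        omega
      · intro hc
        exfalso
        omega

theorem stmt15 (m : ℕ) (hm : Even m) (h2 : 2 ≤ m) (y : ℕ → ℕ) (hy : IsY m y)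
    (h0 : y 0 = 0) (h1 : y 1 = 1) (hF : ∃ p ∈ FF' m y, p.1 ≠ 0)
    (x x' : ℕ → ℕ) (h : IsSt m y x x') : 3 ≤ (SS m x').card := by
  classical
  obtain ⟨hxX, ⟨hx'X, hx'0, hx'1⟩, hsum, hunion, hinter, _⟩ := h
  -- 0 ∈ SS m x'
  have h0mem : 0 ∈ SS m x' := by
    rw [mem_SS_iff]
    have hlt : x' 0 < x' 1 := by omega
    exact ⟨by omega, Or.inl rfl, Or.inr hlt⟩
  -- some nonzero element of SS m x'
  obtain ⟨p, hpF', hp1⟩ := hF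
  have hpFF : p ∈ FF m y ∧ Odd (p.2 - p.1 + 1) := by
    rw [FF', Finset.mem_filter] at hpF'
    exact hpF'
  obtain ⟨hpFF, hpodd⟩ := hpFF
  have hpmem := hpFF
  rw [FF, Finset.mem_filter, Finset.mem_product, Finset.mem_range, Finset.mem_range] at hpmem
  obtain ⟨⟨hp1m, hp2m⟩, hple, hpleft, hpright, hpconst⟩ := hpmem
  have hkey : ∃ k ∈ SS m x', k ≠ 0 := by
    by_contra hcon
    push_neg at hcon
    -- p.1 and p.2 belong to RR, hence to SS x (since nonzero, not in SS x')
    have hp2ne : p.2 ≠ 0 := by omega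
    have hmemRR : ∀ k, (k = p.1 ∨ k = p.2) → k ∈ RR m y := by
      intro k hk
      rw [RR, Finset.mem_filter, Finset.mem_range]
      exact ⟨by omega, p, hpFF, hk⟩
    have hinSSx : ∀ k, (k = p.1 ∨ k = p.2) → k ∈ SS m x := by
      intro k hk
      have := hmemRR k hk
      rw [← hunion, Finset.mem_union] at this
      rcases this with h' | h'
      · exact h'
      · exfalso
        have := hcon k h'
        omega
    rcases eq_or_lt_of_le hple with heq | hlt
    · -- singleton interval: p.1 ∈ RR0 ⊆ SS x' : contradiction
      have hpp : (p.1, p.1) ∈ FF m y := by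
        have : p = (p.1, p.2) := rfl
        rw [this, ← heq] at hpFF
        exact hpFF
      have : p.1 ∈ RR0 m y := by
        rw [RR0, Finset.mem_filter, Finset.mem_range]
        exact ⟨by omega, hpp⟩
      rw [← hinter, Finset.mem_inter] at this
      exact hp1 (hcon p.1 this.2)
    · -- nontrivial interval: use alternation
      have hd : (p.2 - p.1) % 2 = 0 := by
        rcases hpodd with ⟨t, ht⟩
        omega
      have hstep : ∀ k, p.1 ≤ k → k < p.2 → y (k + 1) = y k + 1 := by
        intro k hk1 hk2
        have := hpconst k (Finset.mem_Ico.mpr ⟨hk1, hk2⟩)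
        omega
      have hSx1 := hinSSx p.1 (Or.inl rfl)
      have hSx2 := hinSSx p.2 (Or.inr rfl)
      rw [mem_SS_iff] at hSx1 hSx2
      have hx1lt : x p.1 < x (p.1 + 1) := by
        rcases hSx1.2.2 with h' | h'
        · omega
        · exact h'
      have hx2lt : x (p.2 - 1) < x p.2 := by
        rcases hSx2.2.1 with h' | h'
        · omega
        · exact h'
      set j := p.2 - p.1 - 1 with hjdef
      have hjodd : j % 2 = 1 := by omega
      have halt := (alt_steps m p.1 p.2 y x x' hxX hx'X hsum (by omega) hstep hx1lt
        j (by omega)).2 hjodd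
      have e1 : p.1 + j = p.2 - 1 := by omega
      rw [e1] at halt
      rw [show p.2 - 1 + 1 = p.2 from by omega] at halt
      omega
  obtain ⟨k, hk, hk0⟩ := hkey
  have hcard2 : 2 ≤ (SS m x').card := by
    rw [show (2 : ℕ) = 1 + 1 from rfl]
    exact Finset.one_lt_card.mpr ⟨0, h0mem, k, hk, fun hh => hk0 hh.symm⟩
  have hpar := SS_card_parity m x' hx'X
  have hm2 : m % 2 = 0 := Nat.even_iff.mp hm
  omega
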